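/- Under the stated hypotheses, suppose I ± R_x are invertible for all x in an interval (x₀, ∞), and suppose the function V(x) = −C(exp(−xA)·(I − R_x²)⁻¹·exp(−xA)·b) is integrable on (x₀, ∞). Then U(x) = exp(2·∫_x^∞ V(t) dt) is twice differentiable on (x₀, ∞) and satisfies the Schrödinger-type equation U″(x) = −4·a(x)·U(x), where a(x) = C(exp(−xA)·(I+R_x)⁻¹·A·(I+R_x)⁻¹·exp(−xA)·b). -/

import Mathlib

open MeasureTheory NormedSpace
set_option synthInstance.maxHeartbeats 1000000
set_option maxHeartbeats 1000000

/-- The semigroup `exp(-tA)` generated by a bounded operator `A`. -/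
noncomputable def expA {H : Type*} [NormedAddCommGroup H] [InnerProductSpace ℂ H]
    [CompleteSpace H] (A : H →L[ℂ] H) (t : ℝ) : H →L[ℂ] H :=
  NormedSpace.exp ((-(t : ℂ)) • A)

/-- `R_x = ∫_x^∞ exp(-tA)·BC·exp(-tA) dt` as a Bochner integral. -/
noncomputable def Rop {H : Type*} [NormedAddCommGroup H] [InnerProductSpace ℂ H]
    [CompleteSpace H] (A : H →L[ℂ] H) (BC : H →L[ℂ] H) (x : ℝ) : H →L[ℂ] H :=
  ∫ t in Set.Ioi x, expA A t * BC * expA A t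

section aux
variable {H : Type*} [NormedAddCommGroup H] [InnerProductSpace ℂ H] [CompleteSpace H]

lemma expA_eq (A : H →L[ℂ] H) (t : ℝ) : expA A t = exp (t • (-A)) := by
  rw [expA]
  congr 1
  rw [smul_neg, neg_smul, ← Complex.coe_smul]

lemma expA_hasDerivAt (A : H →L[ℂ] H) (x : ℝ) :
    HasDerivAt (expA A) (-(A * expA A x)) x := by
  have h := hasDerivAt_exp_smul_const' (𝕂 := ℝ) (-A) x
  simp only [← expA_eq] at h
  simpa [neg_mul] using h

lemma expA_comm (A : H →L[ℂ] H) (x : ℝ) : A * expA A x = expA A x * A := by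
  have : Commute A ((-(x:ℂ)) • A) := (Commute.refl A).smul_right _
  exact (this.exp_right)

end aux
section aux2
variable {H : Type*} [NormedAddCommGroup H] [InnerProductSpace ℂ H] [CompleteSpace H]

/-- The integrand of `Rop`. -/
noncomputable def fop (A BC : H →L[ℂ] H) (t : ℝ) : H →L[ℂ] H := expA A t * BC * expA A t

lemma expA_continuous (A : H →L[ℂ] H) : Continuous (expA A) :=
  continuous_iff_continuousAt.2 fun x => (expA_hasDerivAt A x).continuousAt

lemma fop_continuous (A BC : H →L[ℂ] H) : Continuous (fop A BC) :=
  ((expA_continuous A).mul continuous_const).mul (expA_continuous A)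

variable {A BC : H →L[ℂ] H} {M ε : ℝ} (hM : 0 < M) (hε : 0 < ε)
  (hdecay : ∀ t : ℝ, 0 ≤ t → ‖expA A t‖ ≤ M * Real.exp (-ε * t))
include hM hε hdecay

lemma fop_norm_le : ∀ t : ℝ, 0 ≤ t →
    ‖fop A BC t‖ ≤ M * M * ‖BC‖ * Real.exp (-(2 * ε) * t) := by
  intro t ht
  have h1 := hdecay t ht
  have h2 : ‖fop A BC t‖ ≤ ‖expA A t‖ * ‖BC‖ * ‖expA A t‖ :=
    le_trans (norm_mul_le _ _) (by gcongr; exact norm_mul_le _ _)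
  have hBC : (0:ℝ) ≤ ‖BC‖ := norm_nonneg _
  calc ‖fop A BC t‖ ≤ (M * Real.exp (-ε * t)) * ‖BC‖ * (M * Real.exp (-ε * t)) := by
        refine h2.trans ?_
        gcongr <;> first | exact h1 | positivity
    _ = M * M * ‖BC‖ * Real.exp (-(2 * ε) * t) := by
        rw [show -(2*ε)*t = (-ε*t) + (-ε*t) by ring, Real.exp_add]; ring

lemma fop_integrableOn (x : ℝ) :
    MeasureTheory.IntegrableOn (fop A BC) (Set.Ioi x) := by
  set c := max x 0 with hc
  have hxc : x ≤ c := le_max_left _ _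
  have h1 : MeasureTheory.IntegrableOn (fop A BC) (Set.Ioc x c) :=
    (fop_continuous A BC).integrableOn_Ioc
  have h2 : MeasureTheory.IntegrableOn (fop A BC) (Set.Ioi c) := by
    have hint : MeasureTheory.IntegrableOn
        (fun t => M * M * ‖BC‖ * Real.exp (-(2*ε) * t)) (Set.Ioi c) := by
      have := (exp_neg_integrableOn_Ioi c (by positivity : (0:ℝ) < 2*ε))
      exact this.const_mul _
    refine hint.mono' ((fop_continuous A BC).aestronglyMeasurable.restrict) ?_
    filter_upwards [MeasureTheory.ae_restrict_mem measurableSet_Ioi] with t ht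
    exact fop_norm_le hM hε hdecay t (le_trans (le_max_right x 0) ht.le)
  have : Set.Ioc x c ∪ Set.Ioi c = Set.Ioi x := Set.Ioc_union_Ioi_eq_Ioi hxc
  rw [← this]
  exact h1.union h2

lemma fop_tendsto : Filter.Tendsto (fop A BC) Filter.atTop (nhds 0) := by
  have h : Filter.Tendsto (fun t : ℝ => M * M * ‖BC‖ * Real.exp (-(2*ε) * t))
      Filter.atTop (nhds 0) := by
    have h0 : Filter.Tendsto (fun t : ℝ => -(2*ε) * t) Filter.atTop Filter.atBot :=
      (Filter.tendsto_const_mul_atBot_of_neg (by linarith : -(2*ε) < 0)).2 Filter.tendsto_id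
    have := Real.tendsto_exp_atBot.comp h0
    simpa using this.const_mul (M * M * ‖BC‖)
  refine squeeze_zero_norm' ?_ h
  filter_upwards [Filter.eventually_ge_atTop 0] with t ht
  exact fop_norm_le hM hε hdecay t ht

end aux2
section aux3
variable {H : Type*} [NormedAddCommGroup H] [InnerProductSpace ℂ H] [CompleteSpace H]

open MeasureTheory in
lemma integral_Ioi_split {E : Type*} [NormedAddCommGroup E] [NormedSpace ℝ E]
    (g : ℝ → E) {x y : ℝ} (hxy : x ≤ y) (hint : IntegrableOn g (Set.Ioi x)) :
    (∫ t in Set.Ioi x, g t) = (∫ t in Set.Ioc x y, g t) + ∫ t in Set.Ioi y, g t := by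
  rw [← setIntegral_union (Set.Ioc_disjoint_Ioi le_rfl) measurableSet_Ioi
    (hint.mono_set (Set.Ioc_subset_Ioi_self)) (hint.mono_set (Set.Ioi_subset_Ioi hxy)),
    Set.Ioc_union_Ioi_eq_Ioi hxy]

lemma Rop_fop (A BC : H →L[ℂ] H) (x : ℝ) :
    Rop A BC x = ∫ t in Set.Ioi x, fop A BC t := rfl

variable {A BC : H →L[ℂ] H} {M ε : ℝ} (hM : 0 < M) (hε : 0 < ε)
  (hdecay : ∀ t : ℝ, 0 ≤ t → ‖expA A t‖ ≤ M * Real.exp (-ε * t))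
include hM hε hdecay

lemma Rop_eq (x y : ℝ) :
    Rop A BC y = Rop A BC x - ∫ t in x..y, fop A BC t := by
  rcases le_total x y with h | h
  · rw [intervalIntegral.integral_of_le h, Rop_fop, Rop_fop,
      integral_Ioi_split (fop A BC) h (fop_integrableOn hM hε hdecay x)]
    abel
  · rw [intervalIntegral.integral_symm, intervalIntegral.integral_of_le h, Rop_fop, Rop_fop,
      integral_Ioi_split (fop A BC) h (fop_integrableOn hM hε hdecay y)]
    abel

lemma Rop_hasDerivAt (x : ℝ) :
    HasDerivAt (Rop A BC) (-(fop A BC x)) x := by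
  have h1 : IntervalIntegrable (fop A BC) MeasureTheory.volume x x :=
    (fop_continuous A BC).intervalIntegrable x x
  have h2 := intervalIntegral.integral_hasDerivAt_right h1
    ((fop_continuous A BC).stronglyMeasurableAtFilter _ _)
    (fop_continuous A BC).continuousAt
  have h3 : HasDerivAt (fun y => Rop A BC x - ∫ t in x..y, fop A BC t)
      (-(fop A BC x)) x := by simpa using (hasDerivAt_const x (Rop A BC x)).fun_sub h2
  exact h3.congr_of_eventuallyEq
    (Filter.Eventually.of_forall fun y => Rop_eq hM hε hdecay x y)

end aux3
section aux4
variable {H : Type*} [NormedAddCommGroup H] [InnerProductSpace ℂ H] [CompleteSpace H]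

lemma fop_hasDerivAt (A BC : H →L[ℂ] H) (t : ℝ) :
    HasDerivAt (fop A BC) (-(A * fop A BC t + fop A BC t * A)) t := by
  have h := (((expA_hasDerivAt A t).fun_mul (hasDerivAt_const t BC)).fun_mul
    (expA_hasDerivAt A t))
  refine h.congr_deriv ?_
  have hc := expA_comm A t
  rw [fop, mul_assoc (expA A t * BC) (expA A t) A, ← hc]
  noncomm_ring

variable {A BC : H →L[ℂ] H} {M ε : ℝ} (hM : 0 < M) (hε : 0 < ε)
  (hdecay : ∀ t : ℝ, 0 ≤ t → ‖expA A t‖ ≤ M * Real.exp (-ε * t))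
include hM hε hdecay

open MeasureTheory in
lemma lyapunov (x : ℝ) :
    A * Rop A BC x + Rop A BC x * A = fop A BC x := by
  set L1 : (H →L[ℂ] H) →L[ℂ] (H →L[ℂ] H) := ContinuousLinearMap.mul ℂ _ A with hL1
  set L2 : (H →L[ℂ] H) →L[ℂ] (H →L[ℂ] H) := (ContinuousLinearMap.mul ℂ _).flip A with hL2
  have hint : IntegrableOn (fop A BC) (Set.Ioi x) := fop_integrableOn hM hε hdecay x
  have hint1 : IntegrableOn (fun t => A * fop A BC t) (Set.Ioi x) :=
    L1.integrable_comp hint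
  have hint2 : IntegrableOn (fun t => fop A BC t * A) (Set.Ioi x) :=
    L2.integrable_comp hint
  have hderiv : ∀ t ∈ Set.Ici x, HasDerivAt (fop A BC)
      (-(A * fop A BC t + fop A BC t * A)) t := fun t _ => fop_hasDerivAt A BC t
  have key := integral_Ioi_of_hasDerivAt_of_tendsto' hderiv
    ((hint1.add hint2).neg) (fop_tendsto hM hε hdecay)
  rw [MeasureTheory.integral_neg, MeasureTheory.integral_add hint1 hint2, zero_sub] at key
  have key2 := neg_injective key
  have e1 : (∫ t in Set.Ioi x, A * fop A BC t) = A * Rop A BC x := by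
    have := L1.integral_comp_comm hint
    simpa [hL1, Rop_fop] using this
  have e2 : (∫ t in Set.Ioi x, fop A BC t * A) = Rop A BC x * A := by
    have := L2.integral_comp_comm hint
    simpa [hL2, Rop_fop] using this
  rw [e1, e2] at key2
  exact key2

end aux4
section aux5
variable {ℛ : Type*} [Ring ℛ]

lemma ring_inverse_eq {w y : ℛ} (h1 : w * y = 1) (h2 : y * w = 1) :
    Ring.inverse w = y :=
  Ring.inverse_unit ⟨w, y, h1, h2⟩

variable {R : ℛ} (hp : IsUnit (1 + R)) (hm : IsUnit (1 - R))
include hp hm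

lemma unit_one_sub_sq : IsUnit (1 - R * R) := by
  have : (1 - R) * (1 + R) = 1 - R * R := by noncomm_ring
  rw [← this]; exact hm.mul hp

lemma inv_sq_eq_PQ :
    Ring.inverse (1 - R * R) = Ring.inverse (1 + R) * Ring.inverse (1 - R) := by
  refine ring_inverse_eq ?_ ?_
  · rw [show (1 - R*R) * (Ring.inverse (1+R) * Ring.inverse (1-R))
        = (1-R) * (((1+R) * Ring.inverse (1+R)) * Ring.inverse (1-R)) from by noncomm_ring,
      Ring.mul_inverse_cancel _ hp, one_mul, Ring.mul_inverse_cancel _ hm]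
  · rw [show (Ring.inverse (1+R) * Ring.inverse (1-R)) * (1 - R*R)
        = Ring.inverse (1+R) * ((Ring.inverse (1-R) * (1-R)) * (1+R)) from by noncomm_ring,
      Ring.inverse_mul_cancel _ hm, one_mul, Ring.inverse_mul_cancel _ hp]

lemma inv_sq_eq_QP :
    Ring.inverse (1 - R * R) = Ring.inverse (1 - R) * Ring.inverse (1 + R) := by
  refine ring_inverse_eq ?_ ?_
  · rw [show (1 - R*R) * (Ring.inverse (1-R) * Ring.inverse (1+R))
        = (1+R) * (((1-R) * Ring.inverse (1-R)) * Ring.inverse (1+R)) from by noncomm_ring,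
      Ring.mul_inverse_cancel _ hm, one_mul, Ring.mul_inverse_cancel _ hp]
  · rw [show (Ring.inverse (1-R) * Ring.inverse (1+R)) * (1 - R*R)
        = Ring.inverse (1-R) * ((Ring.inverse (1+R) * (1+R)) * (1-R)) from by noncomm_ring,
      Ring.inverse_mul_cancel _ hp, one_mul, Ring.inverse_mul_cancel _ hm]

lemma S_mul_one_sub : Ring.inverse (1 - R * R) * (1 - R) = Ring.inverse (1 + R) := by
  rw [inv_sq_eq_PQ hp hm, mul_assoc, Ring.inverse_mul_cancel _ hm, mul_one]

lemma one_sub_mul_S : (1 - R) * Ring.inverse (1 - R * R) = Ring.inverse (1 + R) := by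
  rw [inv_sq_eq_QP hp hm, ← mul_assoc, Ring.mul_inverse_cancel _ hm, one_mul]

lemma R_comm_S : R * Ring.inverse (1 - R * R) = Ring.inverse (1 - R * R) * R := by
  set S := Ring.inverse (1 - R * R) with hS
  have hSW : S * (1 - R*R) = 1 := Ring.inverse_mul_cancel _ (unit_one_sub_sq hp hm)
  have hWS : (1 - R*R) * S = 1 := Ring.mul_inverse_cancel _ (unit_one_sub_sq hp hm)
  calc R * S = (S * (1 - R*R)) * (R * S) := by rw [hSW, one_mul]
    _ = (S * R) * ((1 - R*R) * S) := by noncomm_ring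
    _ = S * R := by rw [hWS, mul_one]

lemma P_add_SR : Ring.inverse (1 + R) + Ring.inverse (1 - R * R) * R
    = Ring.inverse (1 - R * R) := by
  rw [← S_mul_one_sub hp hm]; noncomm_ring

lemma key_op_identity (A : ℛ) :
    A * Ring.inverse (1 - R * R) + Ring.inverse (1 - R * R) * A
    = 2 * (Ring.inverse (1 + R) * A * Ring.inverse (1 + R))
      + (Ring.inverse (1 + R) * (A * R + R * A) * Ring.inverse (1 - R * R)
        + Ring.inverse (1 - R * R) * (A * R + R * A) * Ring.inverse (1 + R)) := by
  set S := Ring.inverse (1 - R * R) with hS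
  set K := A * R + R * A with hK
  have hSW : S * (1 - R*R) = 1 := Ring.inverse_mul_cancel _ (unit_one_sub_sq hp hm)
  have hWS : (1 - R*R) * S = 1 := Ring.mul_inverse_cancel _ (unit_one_sub_sq hp hm)
  have hP1 : S * (1 - R) = Ring.inverse (1 + R) := S_mul_one_sub hp hm
  have hP2 : (1 - R) * S = Ring.inverse (1 + R) := one_sub_mul_S hp hm
  have inner : (1 - R*R) * A + A * (1 - R*R)
      = 2 * ((1-R) * A * (1-R)) + ((1-R) * K + K * (1-R)) := by
    rw [hK]; noncomm_ring
  calc A * S + S * A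
      = (S * ((1 - R*R) * A)) * S + S * ((A * (1 - R*R)) * S) := by
        rw [← mul_assoc S, hSW, one_mul, mul_assoc A, hWS, mul_one]
    _ = S * (((1 - R*R) * A + A * (1 - R*R)) * S) := by noncomm_ring
    _ = S * ((2 * ((1-R) * A * (1-R)) + ((1-R) * K + K * (1-R))) * S) := by rw [inner]
    _ = 2 * ((S * (1-R)) * A * ((1-R) * S)) + ((S * (1-R)) * K * S + S * K * ((1-R) * S)) := by
        noncomm_ring
    _ = _ := by rw [hP1, hP2]

end aux5
section aux6
variable {H : Type*} [NormedAddCommGroup H] [InnerProductSpace ℂ H] [CompleteSpace H]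

lemma split_apply (C : H →L[ℂ] ℂ) (b : H) (X Y : H →L[ℂ] H) (v : H) :
    C ((X * C.smulRight b * Y) v) = C (Y v) * C (X b) := by
  simp [ContinuousLinearMap.mul_apply, _root_.map_smul, smul_eq_mul, mul_comm]

end aux6


/-- With the rank-one operator `BC : v ↦ C(v)·b` and `R_x` as above, if `I ± R_x` are
invertible for all `x ∈ (x₀,∞)` and `V(x) = −C(exp(−xA)·(I − R_x²)⁻¹·exp(−xA)·b)` is
integrable on `(x₀,∞)`, then `U(x) = exp(2·∫_x^∞ V(t) dt)` is twice differentiable on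
`(x₀,∞)` and satisfies `U″(x) = −4·a(x)·U(x)`, where
`a(x) = C(exp(−xA)·(I+R_x)⁻¹·A·(I+R_x)⁻¹·exp(−xA)·b)`. -/
theorem schroedinger_equation_for_U
    {H : Type*} [NormedAddCommGroup H] [InnerProductSpace ℂ H] [CompleteSpace H]
    (A : H →L[ℂ] H) (b : H) (C : H →L[ℂ] ℂ)
    (M ε : ℝ) (hM : 0 < M) (hε : 0 < ε)
    (hdecay : ∀ t : ℝ, 0 ≤ t → ‖expA A t‖ ≤ M * Real.exp (-ε * t))
    (x₀ : ℝ)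
    (hinvp : ∀ x ∈ Set.Ioi x₀, IsUnit (1 + Rop A (C.smulRight b) x))
    (hinvm : ∀ x ∈ Set.Ioi x₀, IsUnit (1 - Rop A (C.smulRight b) x))
    (V : ℝ → ℂ)
    (hV : ∀ x : ℝ, V x = -(C ((expA A x *
      Ring.inverse (1 - Rop A (C.smulRight b) x * Rop A (C.smulRight b) x) *
      expA A x) b)))
    (hVint : IntegrableOn V (Set.Ioi x₀))
    (a : ℝ → ℂ)
    (ha : ∀ x : ℝ, a x = C ((expA A x *
      Ring.inverse (1 + Rop A (C.smulRight b) x) * A *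
      Ring.inverse (1 + Rop A (C.smulRight b) x) * expA A x) b))
    (U : ℝ → ℂ)
    (hU : ∀ x : ℝ, U x = Complex.exp (2 * ∫ t in Set.Ioi x, V t)) :
    ∃ U' : ℝ → ℂ,
      (∀ x ∈ Set.Ioi x₀, HasDerivAt U (U' x) x) ∧
      (∀ x ∈ Set.Ioi x₀, HasDerivAt U' (-4 * a x * U x) x) := by
  set BC := C.smulRight b with hBC
  -- Step 1: V is differentiable with V' = 2a + 2V²
  have hVd : ∀ x ∈ Set.Ioi x₀, HasDerivAt V (2 * a x + 2 * (V x)^2) x := by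
    intro x hx
    have hp := hinvp x hx
    have hm := hinvm x hx
    have hVx := hV x
    have hax := ha x
    obtain ⟨u, hu⟩ := unit_one_sub_sq hp hm
    set R := Rop A BC x with hR
    set E := expA A x with hE
    set S := Ring.inverse (1 - R * R) with hS
    set P := Ring.inverse (1 + R) with hP
    set K := fop A BC x with hK
    have hAE : A * E = E * A := expA_comm A x
    have hKdef : K = E * BC * E := rfl
    -- derivative of 1 - R_y R_y
    have hRd := Rop_hasDerivAt (A := A) (BC := BC) hM hε hdecay x
    have hwd : HasDerivAt (fun y => 1 - Rop A BC y * Rop A BC y) (K * R + R * K) x := by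
      have h := (hasDerivAt_const x (1 : H →L[ℂ] H)).fun_sub (hRd.fun_mul hRd)
      refine h.congr_deriv ?_
      rw [← hR, ← hK]
      noncomm_ring
    -- derivative of S_y
    have hSd : HasDerivAt (fun y => Ring.inverse (1 - Rop A BC y * Rop A BC y))
        (-(S * (K * R + R * K) * S)) x := by
      have h1 := hasFDerivAt_ringInverse (𝕜 := ℝ) u
      rw [hu] at h1
      have h2 := h1.comp_hasDerivAt x hwd
      have hui : ((u⁻¹ : (H →L[ℂ] H)ˣ) : H →L[ℂ] H) = S := by
        rw [← Ring.inverse_unit u, hu]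
      simpa [hui, ContinuousLinearMap.mulLeftRight_apply, Function.comp_def] using h2
    have hEd := expA_hasDerivAt A x
    -- derivative of the operator-valued product
    have hG : HasDerivAt
        (fun y => expA A y * Ring.inverse (1 - Rop A BC y * Rop A BC y) * expA A y)
        (((-(A * E)) * S + E * -(S * (K * R + R * K) * S)) * E + E * S * -(A * E)) x :=
      (hEd.fun_mul hSd).fun_mul hEd
    set D := ((-(A * E)) * S + E * -(S * (K * R + R * K) * S)) * E + E * S * -(A * E) with hD
    -- derivative of V
    set Φ : (H →L[ℂ] H) →L[ℂ] ℂ := C.comp ((ContinuousLinearMap.apply ℂ H) b) with hΦ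
    have hCb := ((Φ.restrictScalars ℝ).hasFDerivAt.comp_hasDerivAt x hG).neg
    have hVd' : HasDerivAt V (-(C (D b))) x := by
      have hDb : Φ D = C (D b) := rfl
      rw [← hDb]
      refine HasDerivAt.congr_of_eventuallyEq hCb ?_
      exact Filter.Eventually.of_forall fun y => by rw [hV y]; rfl
    -- now compute the value
    have key := key_op_identity hp hm A
    rw [lyapunov hM hε hdecay x, ← hK, ← hS, ← hP] at key
    have hDneg : -D = A*E*S*E + E*(S*(K*R+R*K)*S)*E + E*S*A*E := by
      rw [hD]; noncomm_ring
    have hcomb : A*E*S*E + E*(S*(K*R+R*K)*S)*E + E*S*A*E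
        = E*((A*S + S*A) + S*(K*R+R*K)*S)*E := by
      rw [hAE]; noncomm_ring
    have hfin : E*((A*S + S*A) + S*(K*R+R*K)*S)*E
        = (E*P*A*P*E + E*P*A*P*E)
          + ((E*P*E)*BC*(E*S*E) + (E*S*E)*BC*(E*P*E)
            + (E*S*E)*BC*(E*R*S*E) + (E*S*R*E)*BC*(E*S*E)) := by
      rw [key, hKdef]; noncomm_ring
    have hrr : E*R*S*E = E*S*R*E := by
      rw [mul_assoc E R S, R_comm_S hp hm, ← mul_assoc]
    have hval : -(C (D b)) = 2 * a x + 2 * (V x)^2 := by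
      have h0 : -(C (D b)) = C ((-D) b) := by
        rw [ContinuousLinearMap.neg_apply, map_neg]
      rw [h0, hDneg, hcomb, hfin, hrr]
      simp only [hBC, ContinuousLinearMap.add_apply, map_add, split_apply]
      set v := C ((E*S*E) b) with hv
      set p := C ((E*P*E) b) with hpdef
      set r := C ((E*S*R*E) b) with hrdef
      have hVv : V x = -v := hVx
      have hav : a x = C ((E*P*A*P*E) b) := hax
      have hpr : p + r = v := by
        have hop : E*P*E + E*S*R*E = E*S*E := by
          rw [show E*P*E + E*S*R*E = E*(P + S*R)*E from by noncomm_ring, P_add_SR hp hm]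
        rw [hpdef, hrdef, hv, ← hop]
        simp [ContinuousLinearMap.add_apply, map_add]
      rw [← hav, hVv]
      linear_combination (2*v) * hpr
    rwa [hval] at hVd'
  -- Step 2: continuity/integrability infrastructure for V
  have hVcont : ContinuousOn V (Set.Ioi x₀) :=
    fun y hy => ((hVd y hy).continuousAt).continuousWithinAt
  -- Step 3: derivative of W y = ∫_{Ioi y} V
  have hWd : ∀ x ∈ Set.Ioi x₀, HasDerivAt (fun y => ∫ t in Set.Ioi y, V t) (-(V x)) x := by
    intro x hx
    have h1 : IntervalIntegrable V MeasureTheory.volume x x := ⟨by simp, by simp⟩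
    have h2 := intervalIntegral.integral_hasDerivAt_right h1
      (hVcont.stronglyMeasurableAtFilter isOpen_Ioi x hx) (hVd x hx).continuousAt
    have h3 : HasDerivAt (fun y => (∫ t in Set.Ioi x, V t) - ∫ t in x..y, V t) (-(V x)) x := by
      simpa using (hasDerivAt_const x (∫ t in Set.Ioi x, V t)).fun_sub h2
    refine h3.congr_of_eventuallyEq ?_
    filter_upwards [isOpen_Ioi.mem_nhds hx] with y hy
    rcases le_total x y with h | h
    · rw [intervalIntegral.integral_of_le h,
        integral_Ioi_split V h (hVint.mono_set (Set.Ioi_subset_Ioi hx.le))]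
      abel
    · rw [intervalIntegral.integral_symm, intervalIntegral.integral_of_le h,
        integral_Ioi_split V h (hVint.mono_set (Set.Ioi_subset_Ioi hy.le))]
      abel
  -- Step 4: assemble
  refine ⟨fun y => -2 * V y * U y, ?_, ?_⟩
  · intro x hx
    have h := ((hWd x hx).const_mul (2:ℂ)).cexp
    have h2 : HasDerivAt U (Complex.exp (2 * ∫ t in Set.Ioi x, V t) * (2 * -(V x))) x := by
      refine h.congr_of_eventuallyEq (Filter.Eventually.of_forall fun y => (hU y))
    show HasDerivAt U (-2 * V x * U x) x
    convert h2 using 1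
    rw [hU x]; ring
  · intro x hx
    have hUd : HasDerivAt U (-2 * V x * U x) x := by
      have h := ((hWd x hx).const_mul (2:ℂ)).cexp
      have h2 : HasDerivAt U (Complex.exp (2 * ∫ t in Set.Ioi x, V t) * (2 * -(V x))) x :=
        h.congr_of_eventuallyEq (Filter.Eventually.of_forall fun y => (hU y))
      convert h2 using 1
      rw [hU x]; ring
    have h := ((hVd x hx).const_mul (-2:ℂ)).fun_mul hUd
    refine h.congr_deriv ?_
    ring
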